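/- Let p : [0,∞) → ℝ be integrable and of bounded variation on [0,∞), with total variation V(p). Then for every l ∈ ℕ, l ≥ 1, there exists a function p_l : [0,∞) → ℝ that is constant on each interval [i/l, (i+1)/l), i ∈ ℕ, such that ∫_{[0,∞)} |p_l − p| dx ≤ V(p)/l. -/

import Mathlib

open MeasureTheory

/-- For an integrable function `p` of bounded variation on `[0,∞)`
with total variation `V(p)`, and any `l ≥ 1`, there is a function `p_l` constant on
each interval `[i/l, (i+1)/l)` such that `∫_{[0,∞)} |p_l − p| ≤ V(p)/l`. -/
theorem step_approximation_of_boundedVariation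
    (p : ℝ → ℝ)
    (hint : IntegrableOn p (Set.Ici (0 : ℝ)))
    (hbv : BoundedVariationOn p (Set.Ici (0 : ℝ)))
    (l : ℕ) (hl : 1 ≤ l) :
    ∃ pl : ℝ → ℝ,
      (∀ i : ℕ, ∀ x ∈ Set.Ico ((i : ℝ) / l) (((i : ℝ) + 1) / l),
        ∀ y ∈ Set.Ico ((i : ℝ) / l) (((i : ℝ) + 1) / l), pl x = pl y) ∧
      (∫⁻ x in Set.Ici (0 : ℝ), ENNReal.ofReal |pl x - p x|)
        ≤ eVariationOn p (Set.Ici (0 : ℝ)) / (l : ENNReal) := by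
  have hL : (0:ℝ) < (l:ℝ) := by exact_mod_cast hl
  set pl : ℝ → ℝ := fun x => p ((⌊x * l⌋ : ℝ) / l) with hpl
  have hfloor : ∀ i : ℕ, ∀ x ∈ Set.Ico ((i : ℝ) / l) (((i : ℝ) + 1) / l),
      pl x = p ((i : ℝ) / l) := by
    intro i x hx
    have h1 : (i : ℝ) ≤ x * l := by
      have := hx.1; rw [div_le_iff₀ hL] at this; linarith
    have h2 : x * l < (i : ℝ) + 1 := by
      have := hx.2; rwa [lt_div_iff₀ hL] at this
    have hfe : ⌊x * (l:ℝ)⌋ = (i : ℤ) := by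
      apply Int.floor_eq_iff.mpr
      constructor <;> push_cast <;> [exact h1; exact h2]
    simp [hpl, hfe]
  refine ⟨pl, ?_, ?_⟩
  · intro i x hx y hy
    rw [hfloor i x hx, hfloor i y hy]
  set V : ℕ → ENNReal := fun i =>
    eVariationOn p (Set.Ici 0 ∩ Set.Icc ((i:ℝ)/l) (((i:ℝ)+1)/l)) with hV
  have hIco : ∀ i : ℕ, Set.Ico ((i:ℝ)/l) (((i:ℝ)+1)/l) ⊆ Set.Ici (0:ℝ) := by
    intro i x hx
    have : (0:ℝ) ≤ (i:ℝ)/l := by positivity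
    exact le_trans this hx.1
  have hcover : Set.Ici (0:ℝ) = ⋃ i : ℕ, Set.Ico ((i:ℝ)/l) (((i:ℝ)+1)/l) := by
    ext x
    simp only [Set.mem_iUnion, Set.mem_Ico, Set.mem_Ici]
    constructor
    · intro hx
      have h0 : (0:ℤ) ≤ ⌊x * l⌋ := Int.floor_nonneg.mpr (by positivity)
      have hcast : ((⌊x * l⌋.toNat : ℕ) : ℝ) = ((⌊x * l⌋ : ℤ) : ℝ) := by
        exact_mod_cast Int.toNat_of_nonneg h0
      refine ⟨⌊x * l⌋.toNat, ?_, ?_⟩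
      · rw [div_le_iff₀ hL, hcast]; exact Int.floor_le _
      · rw [lt_div_iff₀ hL, hcast]; exact Int.lt_floor_add_one _
    · rintro ⟨i, h1, h2⟩
      exact hIco i ⟨h1, h2⟩
  have hpt : ∀ i : ℕ, ∀ x ∈ Set.Ico ((i:ℝ)/l) (((i:ℝ)+1)/l),
      ENNReal.ofReal |pl x - p x| ≤ V i := by
    intro i x hx
    rw [hfloor i x hx]
    have h1 : (i:ℝ)/l ∈ Set.Ici (0:ℝ) ∩ Set.Icc ((i:ℝ)/l) (((i:ℝ)+1)/l) := by
      constructor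
      · exact Set.mem_Ici.mpr (by positivity)
      · exact ⟨le_refl _, by rw [div_le_div_iff₀ hL hL]; nlinarith⟩
    have h2 : x ∈ Set.Ici (0:ℝ) ∩ Set.Icc ((i:ℝ)/l) (((i:ℝ)+1)/l) :=
      ⟨hIco i hx, hx.1, le_of_lt hx.2⟩
    have := eVariationOn.edist_le p h1 h2
    rwa [edist_dist, Real.dist_eq] at this
  have hdisj : Pairwise (Function.onFun Disjoint
      (fun i : ℕ => Set.Ico ((i:ℝ)/l) (((i:ℝ)+1)/l))) := by
    have key : ∀ i j : ℕ, i < j →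
        Disjoint (Set.Ico ((i:ℝ)/l) (((i:ℝ)+1)/l)) (Set.Ico ((j:ℝ)/l) (((j:ℝ)+1)/l)) := by
      intro i j hij
      rw [Set.Ico_disjoint_Ico]
      have : (i:ℝ) + 1 ≤ (j:ℝ) := by exact_mod_cast hij
      refine le_trans (min_le_left _ _) (le_trans ?_ (le_max_right _ _))
      exact div_le_div_of_nonneg_right this hL.le |>.trans_eq rfl
    intro i j hij
    rcases hij.lt_or_gt with h | h
    · exact key i j h
    · exact (key j i h).symm
  -- split the integral
  have hsplit : (∫⁻ x in Set.Ici (0:ℝ), ENNReal.ofReal |pl x - p x|)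
      = ∑' i : ℕ, ∫⁻ x in Set.Ico ((i:ℝ)/l) (((i:ℝ)+1)/l), ENNReal.ofReal |pl x - p x| := by
    rw [hcover]
    exact lintegral_iUnion (fun i => measurableSet_Ico) hdisj _
  rw [hsplit]
  -- bound each term
  have hterm : ∀ i : ℕ, (∫⁻ x in Set.Ico ((i:ℝ)/l) (((i:ℝ)+1)/l),
      ENNReal.ofReal |pl x - p x|) ≤ V i * ENNReal.ofReal (1 / l) := by
    intro i
    calc (∫⁻ x in Set.Ico ((i:ℝ)/l) (((i:ℝ)+1)/l), ENNReal.ofReal |pl x - p x|)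
        ≤ ∫⁻ _ in Set.Ico ((i:ℝ)/l) (((i:ℝ)+1)/l), V i :=
          setLIntegral_mono' measurableSet_Ico (hpt i)
      _ = V i * volume (Set.Ico ((i:ℝ)/l) (((i:ℝ)+1)/l)) := by
          rw [setLIntegral_const]
      _ = V i * ENNReal.ofReal (1 / l) := by
          rw [Real.volume_Ico]
          congr 1
          congr 1
          field_simp
          ring
  -- partial sums of V
  have hsum : ∀ n : ℕ, ∑ i ∈ Finset.range n, V i
      = eVariationOn p (Set.Ici 0 ∩ Set.Icc (0:ℝ) ((n:ℝ)/l)) := by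
    intro n
    induction n with
    | zero =>
      simp only [Finset.range_zero, Finset.sum_empty, Nat.cast_zero, zero_div]
      symm
      apply eVariationOn.subsingleton
      intro a ha b hb
      have ha0 : a = 0 := le_antisymm (by simpa using ha.2.2) ha.2.1
      have hb0 : b = 0 := le_antisymm (by simpa using hb.2.2) hb.2.1
      rw [ha0, hb0]
    | succ n ih =>
      rw [Finset.sum_range_succ, ih]
      have hab : (0:ℝ) ≤ (n:ℝ)/l := by positivity
      have hbc : (n:ℝ)/l ≤ ((n:ℝ)+1)/l := by
        apply div_le_div_of_nonneg_right ?_ hL.le |>.trans_eq rfl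
        linarith
      have hb : (n:ℝ)/l ∈ Set.Ici (0:ℝ) := hab
      have := eVariationOn.Icc_add_Icc p hab hbc hb
      rw [this]
      norm_num [Nat.cast_succ]
  have hVle : ∀ n : ℕ, ∑ i ∈ Finset.range n, V i ≤ eVariationOn p (Set.Ici 0) := by
    intro n
    rw [hsum n]
    exact eVariationOn.mono p Set.inter_subset_left
  have htsum : ∑' i, V i ≤ eVariationOn p (Set.Ici 0) := by
    rw [ENNReal.tsum_eq_iSup_sum]
    apply iSup_le
    intro s
    rcases s.exists_nat_subset_range with ⟨n, hn⟩
    exact le_trans (Finset.sum_le_sum_of_subset hn) (hVle n)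
  calc ∑' i : ℕ, (∫⁻ x in Set.Ico ((i:ℝ)/l) (((i:ℝ)+1)/l), ENNReal.ofReal |pl x - p x|)
      ≤ ∑' i : ℕ, V i * ENNReal.ofReal (1 / l) := ENNReal.tsum_le_tsum hterm
    _ = (∑' i : ℕ, V i) * ENNReal.ofReal (1 / l) := ENNReal.tsum_mul_right
    _ ≤ eVariationOn p (Set.Ici 0) * ENNReal.ofReal (1 / l) := by
        exact mul_le_mul_left htsum _
    _ = eVariationOn p (Set.Ici 0) / (l : ENNReal) := by
        rw [ENNReal.div_eq_inv_mul, mul_comm]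
        congr 1
        rw [one_div, ENNReal.ofReal_inv_of_pos hL, ENNReal.ofReal_natCast]
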